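/- For every real M ≥ 2 there exists a constant C > 0 (depending only on M) such that for all r > 0 and all σ ≥ 1: ∫_{{η ∈ ℝ : |η − r/σ| ≥ r/(2σ)}} (1 + |r − ση|)^{−M} e^{−η²/2} dη ≤ C σ^{−1} (1 + r)^{1−M}. -/

import Mathlib

open Real MeasureTheory
open Set

lemma aux_integrable (M c σ a : ℝ) (hM : 2 ≤ M) (hc : 1 ≤ c) (hσ : 1 ≤ σ) :
    Integrable (fun η : ℝ => (c + σ * |η - a|) ^ (-M)) := by
  have hcont : Continuous fun η : ℝ => (c + σ * |η - a|) ^ (-M) := by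
    apply Continuous.rpow_const
    · exact continuous_const.add (continuous_const.mul ((continuous_id.sub continuous_const).abs))
    · intro x
      left
      positivity
  have hint : Integrable (fun η : ℝ => (1 + (η - a) ^ 2)⁻¹) :=
    integrable_inv_one_add_sq.comp_sub_right a
  refine hint.mono hcont.aestronglyMeasurable (Filter.Eventually.of_forall fun x => ?_)
  have h1 : (0:ℝ) < c + σ * |x - a| := by positivity
  have h2 : (1:ℝ) ≤ c + σ * |x - a| := by nlinarith [abs_nonneg (x - a)]
  rw [Real.norm_eq_abs, Real.norm_eq_abs, abs_of_nonneg (by positivity : (0:ℝ) ≤ (c + σ * |x - a|) ^ (-M)), abs_of_nonneg (by positivity : (0:ℝ) ≤ (1 + (x - a)^2)⁻¹)]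
  rw [Real.rpow_neg h1.le]
  refine inv_anti₀ (by positivity) ?_
  calc 1 + (x - a) ^ 2 ≤ (c + σ * |x - a|) ^ (2:ℕ) := by
        have hs : |x - a| ^ 2 = (x - a) ^ 2 := sq_abs _
        have ht : (1:ℝ) + |x - a| ≤ c + σ * |x - a| := by
          nlinarith [abs_nonneg (x - a)]
        nlinarith [abs_nonneg (x - a), sq_nonneg (x-a)]
    _ = (c + σ * |x - a|) ^ (2:ℝ) := by rw [← Real.rpow_natCast]; norm_num
    _ ≤ (c + σ * |x - a|) ^ M := Real.rpow_le_rpow_of_exponent_le h2 hM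

lemma aux_integral (M c σ a : ℝ) (hM : 2 ≤ M) (hc : 0 < c) (hσ : 0 < σ) :
    ∫ η : ℝ, (c + σ * |η - a|) ^ (-M) = σ⁻¹ * (2 * (c ^ (1 - M) / (M - 1))) := by
  have h1 : ∫ η : ℝ, (c + σ * |η - a|) ^ (-M) = ∫ x : ℝ, (c + σ * |x|) ^ (-M) :=
    integral_sub_right_eq_self (fun x : ℝ => (c + σ * |x|) ^ (-M)) a
  have h2 : ∫ x : ℝ, (c + σ * |x|) ^ (-M) = 2 * ∫ x in Ioi (0:ℝ), (c + σ * x) ^ (-M) :=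
    integral_comp_abs (f := fun u => (c + σ * u) ^ (-M))
  have h3 : ∫ x in Ioi (0:ℝ), (c + σ * x) ^ (-M)
      = σ⁻¹ * ∫ x in Ioi (0:ℝ), (c + x) ^ (-M) := by
    have := integral_comp_mul_left_Ioi (fun u => (c + u) ^ (-M)) 0 hσ
    simpa [mul_zero, smul_eq_mul] using this
  have h4 : ∫ x in Ioi (0:ℝ), (c + x) ^ (-M) = ∫ x in Ioi c, x ^ (-M) := by
    rw [← integral_indicator measurableSet_Ioi, ← integral_indicator measurableSet_Ioi]
    rw [← integral_add_left_eq_self (μ := volume) (fun x => (Ioi c).indicator (fun y => y ^ (-M)) x) c]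
    congr 1
    ext x
    simp only [indicator, mem_Ioi]
    by_cases h : 0 < x
    · rw [if_pos h, if_pos (by linarith)]
    · rw [if_neg h, if_neg (by intro hh; exact h (by linarith))]
  have h5 : ∫ x in Ioi c, x ^ (-M) = c ^ (1 - M) / (M - 1) := by
    rw [integral_Ioi_rpow_of_lt (by linarith) hc]
    have : (-M) + 1 = 1 - M := by ring
    rw [this, show (1:ℝ) - M = -(M - 1) by ring, div_neg]; ring
  rw [h1, h2, h3, h4, h5]
  ring


/-- The off-peak part of the Gaussian-weighted integral:
`∫_{|η−r/σ|≥r/2σ} (1+|r−ση|)^{−M} e^{−η²/2} dη ≤ C σ⁻¹ (1+r)^{1−M}`. -/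
theorem gaussian_shifted_weight_off_peak :
    ∀ M : ℝ, 2 ≤ M → ∃ C : ℝ, 0 < C ∧ ∀ r : ℝ, 0 < r → ∀ σ : ℝ, 1 ≤ σ →
      ∫ η in {η : ℝ | r / (2 * σ) ≤ |η - r / σ|},
          (1 + |r - σ * η|) ^ (-M) * Real.exp (-η ^ 2 / 2) ≤
        C * σ⁻¹ * (1 + r) ^ (1 - M) := by
  intro M hM
  refine ⟨(2:ℝ) ^ (2 * M), by positivity, ?_⟩
  intro r hr σ hσ
  have hσ0 : (0:ℝ) < σ := lt_of_lt_of_le one_pos hσ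
  set c : ℝ := 1 + r / 2 with hc_def
  have hc : (1:ℝ) ≤ c := by simp [hc_def]; linarith
  have hc0 : (0:ℝ) < c := by linarith
  set f : ℝ → ℝ := fun η => (1 + |r - σ * η|) ^ (-M) * Real.exp (-η ^ 2 / 2) with hf_def
  set g : ℝ → ℝ := fun η => 2 ^ M * (c + σ * |η - r / σ|) ^ (-M) with hg_def
  have hg_int : Integrable g := (aux_integrable M c σ (r / σ) hM hc hσ).const_mul _
  have hf_cont : Continuous f := by
    apply Continuous.mul
    · apply Continuous.rpow_const
      · exact continuous_const.add (continuous_const.sub (continuous_const.mul continuous_id)).abs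
      · intro x; left; positivity
    · exact (Real.continuous_exp.comp (by continuity))
  have hf_nonneg : ∀ x, 0 ≤ f x := fun x => by
    simp only [hf_def]; positivity
  have hf_int : Integrable f := by
    have hgauss : Integrable (fun η : ℝ => Real.exp (-(1/2) * η ^ 2)) :=
      integrable_exp_neg_mul_sq (by norm_num)
    refine hgauss.mono hf_cont.aestronglyMeasurable (Filter.Eventually.of_forall fun x => ?_)
    rw [Real.norm_eq_abs, Real.norm_eq_abs, abs_of_nonneg (hf_nonneg x),
      abs_of_nonneg (Real.exp_nonneg _)]
    have h1 : (1 + |r - σ * x|) ^ (-M) ≤ 1 := by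
      apply Real.rpow_le_one_of_one_le_of_nonpos
      · nlinarith [abs_nonneg (r - σ * x)]
      · linarith
    have h2 : Real.exp (-x ^ 2 / 2) = Real.exp (-(1/2) * x ^ 2) := by ring_nf
    calc f x ≤ 1 * Real.exp (-x ^ 2 / 2) := by
          simp only [hf_def]
          exact mul_le_mul_of_nonneg_right h1 (Real.exp_nonneg _)
      _ = Real.exp (-(1/2) * x ^ 2) := by rw [one_mul, h2]
  have hSmeas : MeasurableSet {η : ℝ | r / (2 * σ) ≤ |η - r / σ|} :=
    (isClosed_le continuous_const (continuous_id.sub continuous_const).abs).measurableSet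
  have hpt : ∀ η ∈ {η : ℝ | r / (2 * σ) ≤ |η - r / σ|}, f η ≤ g η := by
    intro η hη
    simp only [Set.mem_setOf_eq] at hη
    set X : ℝ := σ * |η - r / σ| with hX_def
    have hXr : r / 2 ≤ X := by
      have := mul_le_mul_of_nonneg_left hη hσ0.le
      calc r / 2 = σ * (r / (2 * σ)) := by field_simp
        _ ≤ X := this
    have hX0 : 0 ≤ X := by positivity
    have habs : |r - σ * η| = X := by
      rw [hX_def, abs_sub_comm, show σ * η - r = σ * (η - r / σ) by field_simp,
        abs_mul, abs_of_pos hσ0]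
    have key : (1 + X) ^ (-M) ≤ 2 ^ M * (c + X) ^ (-M) := by
      have hbase : (c + X) / 2 ≤ 1 + X := by
        simp only [hc_def]; linarith
      have hb0 : (0:ℝ) < (c + X) / 2 := by positivity
      have h1X : (0:ℝ) < 1 + X := by linarith
      have := Real.rpow_le_rpow hb0.le hbase (by linarith : (0:ℝ) ≤ M)
      have hinv : (1 + X) ^ (-M) ≤ ((c + X) / 2) ^ (-M) := by
        rw [Real.rpow_neg h1X.le, Real.rpow_neg hb0.le]
        exact inv_anti₀ (Real.rpow_pos_of_pos hb0 M) this
      calc (1 + X) ^ (-M) ≤ ((c + X) / 2) ^ (-M) := hinv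
        _ = 2 ^ M * (c + X) ^ (-M) := by
            rw [Real.div_rpow (by positivity) (by norm_num),
              Real.rpow_neg (by norm_num : (0:ℝ) ≤ 2)]
            field_simp
    calc f η ≤ (1 + |r - σ * η|) ^ (-M) := by
          simp only [hf_def]
          have : Real.exp (-η ^ 2 / 2) ≤ 1 := Real.exp_le_one_iff.mpr (by nlinarith [sq_nonneg η])
          nlinarith [Real.rpow_nonneg (by positivity : (0:ℝ) ≤ 1 + |r - σ * η|) (-M),
            Real.exp_nonneg (-η ^ 2 / 2)]
      _ = (1 + X) ^ (-M) := by rw [habs]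
      _ ≤ 2 ^ M * (c + X) ^ (-M) := key
      _ = g η := by rw [hg_def]
  have step1 : ∫ η in {η : ℝ | r / (2 * σ) ≤ |η - r / σ|}, f η
      ≤ ∫ η in {η : ℝ | r / (2 * σ) ≤ |η - r / σ|}, g η :=
    setIntegral_mono_on hf_int.integrableOn hg_int.integrableOn hSmeas hpt
  have step2 : ∫ η in {η : ℝ | r / (2 * σ) ≤ |η - r / σ|}, g η ≤ ∫ η, g η :=
    setIntegral_le_integral hg_int (Filter.Eventually.of_forall fun x => by
      simp only [hg_def]; positivity)
  have step3 : ∫ η, g η = 2 ^ M * (σ⁻¹ * (2 * (c ^ (1 - M) / (M - 1)))) := by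
    simp only [hg_def]
    rw [integral_const_mul, aux_integral M c σ (r / σ) hM hc0 hσ0]
  have hpow : c ^ (1 - M) ≤ 2 ^ (M - 1) * (1 + r) ^ (1 - M) := by
    have h2c : (1 + r) ≤ 2 * c := by simp only [hc_def]; linarith
    have hkey : (1 + r) ^ (M - 1) ≤ 2 ^ (M - 1) * c ^ (M - 1) := by
      calc (1 + r) ^ (M - 1) ≤ (2 * c) ^ (M - 1) :=
            Real.rpow_le_rpow (by linarith) h2c (by linarith)
        _ = 2 ^ (M - 1) * c ^ (M - 1) := Real.mul_rpow (by norm_num) hc0.le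
    have hA : (0:ℝ) < c ^ (M - 1) := Real.rpow_pos_of_pos hc0 _
    have hB : (0:ℝ) < (1 + r) ^ (M - 1) := Real.rpow_pos_of_pos (by linarith) _
    rw [show (1:ℝ) - M = -(M - 1) by ring, Real.rpow_neg hc0.le, Real.rpow_neg (by linarith : (0:ℝ) ≤ 1 + r)]
    have hkey' : (1 + r) ^ (M - 1) / 2 ^ (M - 1) ≤ c ^ (M - 1) := by
      rw [div_le_iff₀ (by positivity : (0:ℝ) < 2 ^ (M - 1))]
      linarith [hkey]
    calc (c ^ (M - 1))⁻¹ ≤ ((1 + r) ^ (M - 1) / 2 ^ (M - 1))⁻¹ := by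
          apply inv_anti₀ (by positivity)
          exact hkey'
      _ = 2 ^ (M - 1) * ((1 + r) ^ (M - 1))⁻¹ := by rw [inv_div]; ring
  have hdiv : c ^ (1 - M) / (M - 1) ≤ c ^ (1 - M) := by
    apply div_le_self (Real.rpow_nonneg hc0.le _)
    linarith
  have final : 2 ^ M * (σ⁻¹ * (2 * (c ^ (1 - M) / (M - 1)))) ≤ 2 ^ (2 * M) * σ⁻¹ * (1 + r) ^ (1 - M) := by
    have h2M : (2:ℝ) ^ (2 * M) = 2 ^ M * 2 * 2 ^ (M - 1) := by
      rw [show 2 * M = M + 1 + (M - 1) by ring, Real.rpow_add (by norm_num),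
        Real.rpow_add (by norm_num), Real.rpow_one]
    rw [h2M]
    have hσinv : (0:ℝ) ≤ σ⁻¹ := by positivity
    have h1 : c ^ (1 - M) / (M - 1) ≤ 2 ^ (M - 1) * (1 + r) ^ (1 - M) := le_trans hdiv hpow
    calc 2 ^ M * (σ⁻¹ * (2 * (c ^ (1 - M) / (M - 1))))
        ≤ 2 ^ M * (σ⁻¹ * (2 * (2 ^ (M - 1) * (1 + r) ^ (1 - M)))) := by
          apply mul_le_mul_of_nonneg_left _ (by positivity : (0:ℝ) ≤ (2:ℝ) ^ M)
          apply mul_le_mul_of_nonneg_left _ hσinv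
          apply mul_le_mul_of_nonneg_left h1 (by norm_num)
      _ = 2 ^ M * 2 * 2 ^ (M - 1) * σ⁻¹ * (1 + r) ^ (1 - M) := by ring
  calc ∫ η in {η : ℝ | r / (2 * σ) ≤ |η - r / σ|}, (1 + |r - σ * η|) ^ (-M) * Real.exp (-η ^ 2 / 2)
      = ∫ η in {η : ℝ | r / (2 * σ) ≤ |η - r / σ|}, f η := rfl
    _ ≤ ∫ η in {η : ℝ | r / (2 * σ) ≤ |η - r / σ|}, g η := step1
    _ ≤ ∫ η, g η := step2
    _ = 2 ^ M * (σ⁻¹ * (2 * (c ^ (1 - M) / (M - 1)))) := step3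
    _ ≤ 2 ^ (2 * M) * σ⁻¹ * (1 + r) ^ (1 - M) := final
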